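/- For all a, b ∈ ℚ and z ∈ ℂ, θ_{a,b}(iz, i) = e^{2πi ab} · e^{πz²} · θ_{-b,a}(z, i). -/

import Mathlib

open Complex Real

/-- Theta function with characteristics a, b:
θ_{a,b}(z,τ) = Σ_{n∈ℤ} exp(πi(n+a)²τ + 2πi(n+a)(z+b)). -/
noncomputable def theta (a b : ℝ) (z τ : ℂ) : ℂ :=
  ∑' n : ℤ, Complex.exp (Real.pi * Complex.I * ((n : ℂ) + (a : ℂ))^2 * τ +
    2 * Real.pi * Complex.I * ((n : ℂ) + (a : ℂ)) * (z + (b : ℂ)))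

lemma theta_eq_jacobi (a b : ℝ) (z τ : ℂ) : theta a b z τ =
    Complex.exp (Real.pi * Complex.I * (a:ℂ)^2 * τ + 2 * Real.pi * Complex.I * (a:ℂ) * (z + b)) *
      jacobiTheta₂ ((a:ℂ) * τ + z + b) τ := by
  unfold theta jacobiTheta₂ jacobiTheta₂_term
  rw [← tsum_mul_left]
  refine tsum_congr fun n => ?_
  rw [← Complex.exp_add]
  congr 1
  ring

lemma jacobi_I (w : ℂ) : jacobiTheta₂ w Complex.I =
    Complex.exp (-Real.pi * w^2) * jacobiTheta₂ (-(Complex.I * w)) Complex.I := by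
  have h := jacobiTheta₂_functional_equation w Complex.I
  have h1 : -Complex.I * Complex.I = 1 := by simp [Complex.I_mul_I]
  have h2 : (-1 : ℂ) / Complex.I = Complex.I := by
    field_simp
    rw [Complex.I_sq]
  have h3 : w / Complex.I = -(Complex.I * w) := by
    field_simp; rw [Complex.I_sq]; ring
  have h4 : -(Real.pi:ℂ) * Complex.I * w^2 / Complex.I = -Real.pi * w^2 := by
    field_simp
  rw [h1, h2, h3, h4, one_cpow, div_one, one_mul] at h
  exact h

/-- θ_{a,b}(iz, i) = e^{2πi ab} e^{πz²} θ_{-b,a}(z, i) for a, b ∈ ℚ, z ∈ ℂ. -/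
theorem theta_i_mult (a b : ℚ) (z : ℂ) :
    theta (a : ℝ) (b : ℝ) (Complex.I * z) Complex.I =
      Complex.exp (2 * Real.pi * Complex.I * (a : ℂ) * (b : ℂ)) *
        Complex.exp (Real.pi * z^2) * theta (-(b : ℝ)) (a : ℝ) z Complex.I := by
  rw [theta_eq_jacobi, theta_eq_jacobi, jacobi_I]
  have hw : -(Complex.I * ((((a:ℝ)):ℂ) * Complex.I + Complex.I * z + ((b:ℝ):ℂ)))
      = ((-(b:ℝ) : ℝ) : ℂ) * Complex.I + z + ((a:ℝ):ℂ) := by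
    push_cast
    rw [mul_add, mul_add]
    rw [show Complex.I * ((a:ℂ) * Complex.I) = -(a:ℂ) by rw [mul_comm, mul_assoc, Complex.I_mul_I]; ring]
    rw [show Complex.I * (Complex.I * z) = -z by rw [← mul_assoc, Complex.I_mul_I]; ring]
    ring
  rw [hw]
  simp only [← Complex.exp_add, ← mul_assoc]
  congr 2
  push_cast
  linear_combination (-(Real.pi:ℂ) * (z^2 + (b:ℂ)^2)) * Complex.I_sq
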